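/- Let P be a probability measure on ℝ^d, τ ∈ [0,1), and u ∈ S^{d−1}. Then the objective O(z) = E[‖z − X‖ − ‖X‖] − τ⟨u, z⟩ is coercive: O(z) → ∞ as ‖z‖ → ∞; consequently a minimizer (a geometric quantile of order τ in direction u) exists. -/

import Mathlib

open MeasureTheory Filter

theorem geometric_quantile_objective_coercive (d : ℕ)
    (P : Measure (EuclideanSpace ℝ (Fin d))) [IsProbabilityMeasure P]
    (τ : ℝ) (hτ : τ ∈ Set.Ico (0 : ℝ) 1)
    (u : EuclideanSpace ℝ (Fin d)) (hu : ‖u‖ = 1)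
    (O : EuclideanSpace ℝ (Fin d) → ℝ)
    (hO : ∀ z, O z = (∫ x, (‖z - x‖ - ‖x‖) ∂P) - τ * inner ℝ u z) :
    Tendsto O (cocompact (EuclideanSpace ℝ (Fin d))) atTop ∧
    ∃ z₀, ∀ z, O z₀ ≤ O z := by
  obtain ⟨hτ0, hτ1⟩ := hτ
  -- pointwise bound on the integrand
  have hbound : ∀ (z x : EuclideanSpace ℝ (Fin d)), |‖z - x‖ - ‖x‖| ≤ ‖z‖ := by
    intro z x
    have := abs_norm_sub_norm_le (z - x) (-x)
    simpa [sub_neg_eq_add, sub_add_cancel] using this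
  have hmeas : ∀ z : EuclideanSpace ℝ (Fin d),
      AEStronglyMeasurable (fun x => ‖z - x‖ - ‖x‖) P :=
    fun z => (((continuous_const.sub continuous_id).norm.sub continuous_norm)).aestronglyMeasurable
  have hint : ∀ z : EuclideanSpace ℝ (Fin d),
      Integrable (fun x => ‖z - x‖ - ‖x‖) P := by
    intro z
    refine (integrable_const ‖z‖).mono' (hmeas z) ?_
    filter_upwards with x
    simpa [Real.norm_eq_abs] using hbound z x
  -- continuity of O (it is Lipschitz)
  have hcont : Continuous O := by
    have : LipschitzWith (1 + τ).toNNReal O := by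
      apply LipschitzWith.of_dist_le_mul
      intro z w
      have hco : ((1 + τ).toNNReal : ℝ) = 1 + τ := Real.coe_toNNReal _ (by linarith)
      rw [Real.dist_eq, hO z, hO w, hco]
      have h1 : (∫ x, (‖z - x‖ - ‖x‖) ∂P) - (∫ x, (‖w - x‖ - ‖x‖) ∂P)
          = ∫ x, (‖z - x‖ - ‖w - x‖) ∂P := by
        rw [← integral_sub (hint z) (hint w)]; congr 1; ext x; ring
      have h2 : |∫ x, (‖z - x‖ - ‖w - x‖) ∂P| ≤ ‖z - w‖ := by
        have := norm_integral_le_of_norm_le_const (μ := P)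
          (f := fun x => ‖z - x‖ - ‖w - x‖) (C := ‖z - w‖) ?_
        · simpa [Real.norm_eq_abs] using this
        · filter_upwards with x
          have := abs_norm_sub_norm_le (z - x) (w - x)
          simpa [Real.norm_eq_abs, sub_sub_sub_cancel_right] using this
      have h3 : |(inner ℝ u z : ℝ) - inner ℝ u w| ≤ ‖z - w‖ := by
        rw [← inner_sub_right]
        calc |(inner ℝ u (z - w) : ℝ)| ≤ ‖u‖ * ‖z - w‖ := abs_real_inner_le_norm u (z - w)
          _ = ‖z - w‖ := by rw [hu, one_mul]
      calc |((∫ x, (‖z - x‖ - ‖x‖) ∂P) - τ * inner ℝ u z)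
              - ((∫ x, (‖w - x‖ - ‖x‖) ∂P) - τ * inner ℝ u w)|
          ≤ |(∫ x, (‖z - x‖ - ‖x‖) ∂P) - (∫ x, (‖w - x‖ - ‖x‖) ∂P)|
            + |τ * inner ℝ u z - τ * inner ℝ u w| := by
            apply (abs_sub _ _).trans_eq' ; ring_nf
          _ ≤ ‖z - w‖ + τ * ‖z - w‖ := by
            refine add_le_add (by rw [h1]; exact h2) ?_
            rw [← mul_sub, abs_mul, abs_of_nonneg hτ0]
            exact mul_le_mul_of_nonneg_left h3 hτ0
          _ = (1 + τ) * dist z w := by rw [dist_eq_norm]; ring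
    exact this.continuous
  -- choose a radius R with small tail mass
  set ε : ℝ := (1 - τ) / 4 with hε
  have hεpos : 0 < ε := by rw [hε]; linarith
  have htail : ∃ R : ℕ, (P {x | (R : ℝ) < ‖x‖}).toReal < ε := by
    have hanti : Antitone (fun n : ℕ => {x : EuclideanSpace ℝ (Fin d) | (n : ℝ) < ‖x‖}) := by
      intro m n hmn x hx
      exact lt_of_le_of_lt (Nat.cast_le.mpr hmn : (m:ℝ) ≤ n) hx
    have hms : ∀ n : ℕ, NullMeasurableSet {x : EuclideanSpace ℝ (Fin d) | (n : ℝ) < ‖x‖} P :=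
      fun n => ((isOpen_lt continuous_const continuous_norm).measurableSet).nullMeasurableSet
    have hiInter : (⋂ n : ℕ, {x : EuclideanSpace ℝ (Fin d) | (n : ℝ) < ‖x‖}) = ∅ := by
      ext x
      simp only [Set.mem_iInter, Set.mem_setOf_eq, Set.mem_empty_iff_false, iff_false, not_forall,
        not_lt]
      obtain ⟨n, hn⟩ := exists_nat_ge ‖x‖
      exact ⟨n, hn⟩
    have := MeasureTheory.tendsto_measure_iInter_atTop (μ := P) hms hanti
      ⟨0, measure_ne_top P _⟩
    rw [hiInter, measure_empty] at this
    have h2 := (ENNReal.tendsto_toReal (by simp)).comp this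
    simp only [ENNReal.toReal_zero] at h2
    exact (h2.eventually (eventually_lt_nhds hεpos)).exists
  obtain ⟨R, hR⟩ := htail
  set S : Set (EuclideanSpace ℝ (Fin d)) := {x | (R : ℝ) < ‖x‖} with hS
  have hSmeas : MeasurableSet S := (isOpen_lt continuous_const continuous_norm).measurableSet
  set p : ℝ := (P S).toReal with hp
  have hp0 : 0 ≤ p := ENNReal.toReal_nonneg
  have hple : p ≤ 1 := by
    rw [hp]
    have := measure_mono (Set.subset_univ S) (μ := P)
    calc (P S).toReal ≤ (P Set.univ).toReal :=
      ENNReal.toReal_mono (by simp) this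
      _ = 1 := by simp
  -- lower bound : O z ≥ (1 - τ - 2p) * ‖z‖ - 2R
  have hlow : ∀ z, (1 - τ - 2 * p) * ‖z‖ - 2 * R ≤ O z := by
    intro z
    rw [hO z]
    -- integrand lower bound
    have key : ∀ x, (‖z‖ - 2 * (R + S.indicator (fun _ => ‖z‖) x)) ≤ ‖z - x‖ - ‖x‖ := by
      intro x
      by_cases hx : x ∈ S
      · have h1 : ‖x‖ - ‖z‖ ≤ ‖z - x‖ := by
          have := abs_norm_sub_norm_le x z
          rw [abs_le] at this
          have := this.1
          have hzx : ‖x - z‖ = ‖z - x‖ := norm_sub_rev x z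
          linarith [hzx ▸ (abs_norm_sub_norm_le x z)]
        simp only [Set.indicator_of_mem hx]
        have hR0 : (0:ℝ) ≤ R := Nat.cast_nonneg R
        nlinarith [norm_sub_norm_le x z, norm_sub_rev x z, norm_nonneg (z - x), norm_nonneg x]
      · have hxR : ‖x‖ ≤ R := not_lt.mp hx
        simp only [Set.indicator_of_notMem hx]
        have := norm_sub_norm_le z x
        have hzx : ‖z‖ - ‖x‖ ≤ ‖z - x‖ := by
          have := abs_norm_sub_norm_le z x
          rw [abs_le] at this; linarith [this.1]
        linarith
    have hind_int : Integrable (fun x => ‖z‖ - 2 * (R + S.indicator (fun _ => ‖z‖) x)) P := by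
      apply Integrable.sub (integrable_const _)
      apply Integrable.const_mul
      apply Integrable.add (integrable_const _)
      exact (integrable_const ‖z‖).indicator hSmeas
    have hmono := integral_mono hind_int (hint z) key
    have hind_val : ∫ x, S.indicator (fun _ => ‖z‖) x ∂P = p * ‖z‖ := by
      rw [integral_indicator_const _ hSmeas]; simp [hp, mul_comm, measureReal_def]
    have hIcalc : ∫ x, (‖z‖ - 2 * (R + S.indicator (fun _ => ‖z‖) x)) ∂P
        = ‖z‖ - 2 * R - 2 * p * ‖z‖ := by
      rw [integral_sub (integrable_const _)]
      · rw [integral_const]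
        rw [integral_const_mul, integral_add (integrable_const _)
          ((integrable_const ‖z‖).indicator hSmeas), integral_const, hind_val]
        simp [measure_univ]
        ring
      · apply Integrable.const_mul
        exact (integrable_const _).add ((integrable_const ‖z‖).indicator hSmeas)
    rw [hIcalc] at hmono
    have hinner : τ * inner ℝ u z ≤ τ * ‖z‖ := by
      have h := abs_real_inner_le_norm u z
      rw [hu, one_mul] at h
      have := (abs_le.mp h).2
      exact mul_le_mul_of_nonneg_left this hτ0
    linarith
  have hc : 0 < 1 - τ - 2 * p := by
    have : p < ε := hR
    rw [hε] at this; linarith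
  -- coercivity
  have hcoer : Tendsto O (cocompact (EuclideanSpace ℝ (Fin d))) atTop := by
    apply tendsto_atTop_mono hlow
    apply Filter.tendsto_atTop_add_const_right
    exact (tendsto_norm_cocompact_atTop).const_mul_atTop hc
  exact ⟨hcoer, hcont.exists_forall_le hcoer⟩
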